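/- Fidelity between Choi matrices of qubit amplitude damping channels: For q ∈ [0,1], let ρ_q be the 4×4 complex matrix with rows (1/2, 0, 0, √(1−q)/2), (0, q/2, 0, 0), (0, 0, 0, 0), (√(1−q)/2, 0, 0, (1−q)/2). Then each ρ_q is a density matrix on ℂ⁴, and for all q0, q1 ∈ [0,1], F(ρ_{q0}, ρ_{q1}) = (1 + √((1−q0)·(1−q1)) + √(q0·q1)) / 2. -/

import Mathlib

open Matrix BigOperators Finset ComplexOrder

noncomputable section

/-- A density matrix: positive semidefinite with unit trace. -/
def IsDensityMatrix {ι : Type*} [Fintype ι] (ρ : Matrix ι ι ℂ) : Prop :=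
  ρ.PosSemidef ∧ ρ.trace = 1

/-- The Helstrom minimum error probability for discriminating the states `ρ n`
with prior probabilities `p n`, optimized over all POVMs. -/
def helstrom {ι : Type*} [Fintype ι] [DecidableEq ι] {m : ℕ}
    (ρ : Fin m → Matrix ι ι ℂ) (p : Fin m → ℝ) : ℝ :=
  1 - sSup { x : ℝ | ∃ M : Fin m → Matrix ι ι ℂ,
      (∀ n, (M n).PosSemidef) ∧ (∑ n, M n) = 1 ∧
      x = ∑ n, p n * ((M n * ρ n).trace).re }

open Classical in
/-- The positive semidefinite square root (junk value `0` off the PSD cone). -/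
def psdSqrt {ι : Type*} [Fintype ι] [DecidableEq ι] (A : Matrix ι ι ℂ) : Matrix ι ι ℂ :=
  if h : A.PosSemidef then
    h.1.eigenvectorUnitary.1 * diagonal ((↑) ∘ (Real.sqrt ·) ∘ h.1.eigenvalues) *
      (star h.1.eigenvectorUnitary : Matrix ι ι ℂ)
  else 0

/-- The trace norm `‖A‖₁ = tr √(Aᴴ A)`. -/
def traceNorm {ι : Type*} [Fintype ι] [DecidableEq ι] (A : Matrix ι ι ℂ) : ℝ :=
  ((psdSqrt (Aᴴ * A)).trace).re

/-- The fidelity `F(ρ,σ) = tr √(√ρ σ √ρ)`. -/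
def fidelity {ι : Type*} [Fintype ι] [DecidableEq ι] (ρ σ : Matrix ι ι ℂ) : ℝ :=
  ((psdSqrt (psdSqrt ρ * σ * psdSqrt ρ)).trace).re

/-- The Choi matrix of the qubit amplitude damping channel with damping
probability `q`. -/
def adChoi (q : ℝ) : Matrix (Fin 4) (Fin 4) ℂ :=
  !![1/2, 0, 0, (Real.sqrt (1-q) : ℂ)/2;
     0, ((q : ℝ) : ℂ)/2, 0, 0;
     0, 0, 0, 0;
     (Real.sqrt (1-q) : ℂ)/2, 0, 0, (((1-q : ℝ)) : ℂ)/2]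

/-- rank-1 block `k (1,s)(1,s)ᵀ` on `{0,3}` plus diagonal `c` at index `1`. -/
def Gm (k s c : ℝ) : Matrix (Fin 4) (Fin 4) ℂ :=
  !![(k:ℂ), 0, 0, ((k*s : ℝ) : ℂ);
     0, (c:ℂ), 0, 0;
     0, 0, 0, 0;
     ((k*s : ℝ) : ℂ), 0, 0, ((k*s^2 : ℝ) : ℂ)]

lemma Gm_eq_Gm {k k' s c c' : ℝ} (hk : k = k') (hc : c = c') :
    Gm k s c = Gm k' s c' := by rw [hk, hc]

set_option maxHeartbeats 2000000 in
lemma Gm_triple (k s c k' s' c' : ℝ) :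
    Gm k s c * Gm k' s' c' * Gm k s c
      = Gm (k^2*k'*(1+s*s')^2) s (c^2*c') := by
  ext i j
  fin_cases i <;> fin_cases j <;>
    simp [Gm, Matrix.mul_apply, Fin.sum_univ_four, Matrix.cons_val_zero,
      Matrix.cons_val_one, Matrix.head_cons, Matrix.vecHead, Matrix.vecTail,
      Matrix.cons_val', Matrix.empty_val', Matrix.cons_val_fin_one,
      Function.comp] <;> push_cast <;> ring

lemma Gm_sq (k s c : ℝ) :
    Gm k s c * Gm k s c = Gm (k^2*(1+s^2)) s (c^2) := by
  ext i j
  fin_cases i <;> fin_cases j <;>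
    simp [Gm, Matrix.mul_apply, Fin.sum_univ_four, Matrix.cons_val_zero,
      Matrix.cons_val_one, Matrix.head_cons, Matrix.vecHead, Matrix.vecTail,
      Matrix.cons_val', Matrix.empty_val', Matrix.cons_val_fin_one,
      Function.comp] <;> push_cast <;> ring

lemma Gm_posSemidef {k c : ℝ} (s : ℝ) (hk : 0 ≤ k) (hc : 0 ≤ c) :
    (Gm k s c).PosSemidef := by
  have hB := Matrix.posSemidef_conjTranspose_mul_self
    (!![(Real.sqrt k : ℂ), 0, 0, ((Real.sqrt k * s : ℝ) : ℂ);
        0, ((Real.sqrt c : ℝ) : ℂ), 0, 0;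
        0, 0, 0, 0;
        0, 0, 0, 0] : Matrix (Fin 4) (Fin 4) ℂ)
  have hk2 : ((Real.sqrt k : ℝ) : ℂ) * ((Real.sqrt k : ℝ) : ℂ) = (k : ℂ) := by
    exact_mod_cast congrArg (Complex.ofReal) (Real.mul_self_sqrt hk)
  have hc2 : ((Real.sqrt c : ℝ) : ℂ) * ((Real.sqrt c : ℝ) : ℂ) = (c : ℂ) := by
    exact_mod_cast congrArg (Complex.ofReal) (Real.mul_self_sqrt hc)
  convert hB using 1
  ext i j
  fin_cases i <;> fin_cases j <;>
    simp [Gm, Matrix.mul_apply, Matrix.conjTranspose_apply, Fin.sum_univ_four,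
      Complex.conj_ofReal, Matrix.cons_val_zero,
      Matrix.cons_val_one, Matrix.head_cons, Matrix.vecHead, Matrix.vecTail,
      Matrix.cons_val', Matrix.empty_val', Matrix.cons_val_fin_one,
      Function.comp] <;> push_cast <;>
    (first
      | ring1
      | linear_combination hk2
      | linear_combination -hk2
      | linear_combination hc2
      | linear_combination -hc2
      | linear_combination (s : ℂ) * hk2
      | linear_combination (-(s : ℂ)) * hk2
      | linear_combination ((s : ℂ))^2 * hk2
      | linear_combination (-((s : ℂ))^2) * hk2)

lemma Gm_trace (k s c : ℝ) :
    (Gm k s c).trace = ((k + c + k*s^2 : ℝ) : ℂ) := by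
  simp [Matrix.trace, Gm, Fin.sum_univ_four, Matrix.diag, Matrix.cons_val_zero,
    Matrix.cons_val_one, Matrix.head_cons, Matrix.vecHead, Matrix.vecTail,
    Matrix.cons_val', Matrix.empty_val', Matrix.cons_val_fin_one, Function.comp]
  try push_cast
  try ring

open scoped MatrixOrder in
lemma psdSqrt_eq {ι : Type*} [Fintype ι] [DecidableEq ι] {A B : Matrix ι ι ℂ}
    (hB : B.PosSemidef) (h : B * B = A) : psdSqrt A = B := by
  have hA : A.PosSemidef := by
    rw [← h]
    nth_rewrite 1 [← hB.isHermitian.eq]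
    exact Matrix.posSemidef_conjTranspose_mul_self B
  rw [psdSqrt, dif_pos hA]
  have e : hA.1.eigenvectorUnitary.1 * diagonal ((↑) ∘ (Real.sqrt ·) ∘ hA.1.eigenvalues) *
      (star hA.1.eigenvectorUnitary : Matrix ι ι ℂ) = cfc Real.sqrt A := by
    rw [hA.1.cfc_eq]; rfl
  rw [e, ← cfcₙ_eq_cfc, ← CFC.sqrt_eq_real_sqrt A hA.nonneg]
  exact CFC.sqrt_unique h hB.nonneg

lemma adChoi_eq_Gm {q : ℝ} (hq : q ≤ 1) :
    adChoi q = Gm (1/2) (Real.sqrt (1-q)) (q/2) := by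
  have hs : ((Real.sqrt (1-q) : ℝ) : ℂ) ^ 2 = 1 - (q : ℂ) := by
    exact_mod_cast congrArg (Complex.ofReal) (Real.sq_sqrt (by linarith : (0:ℝ) ≤ 1 - q))
  ext i j
  fin_cases i <;> fin_cases j <;>
    simp [adChoi, Gm, Matrix.cons_val_zero,
      Matrix.cons_val_one, Matrix.head_cons, Matrix.vecHead, Matrix.vecTail,
      Matrix.cons_val', Matrix.empty_val', Matrix.cons_val_fin_one,
      Function.comp] <;> push_cast <;>
    (first
      | ring1
      | linear_combination ((1:ℂ)/2) * hs
      | linear_combination (-(1:ℂ)/2) * hs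
      | linear_combination hs
      | linear_combination -hs)

lemma dens_adChoi {q : ℝ} (hq : q ∈ Set.Icc (0:ℝ) 1) :
    IsDensityMatrix (adChoi q) := by
  constructor
  · rw [adChoi_eq_Gm hq.2]
    exact Gm_posSemidef _ (by norm_num) (by linarith [hq.1])
  · simp [Matrix.trace, adChoi, Fin.sum_univ_four, Matrix.diag, Matrix.cons_val_zero,
      Matrix.cons_val_one, Matrix.head_cons, Matrix.vecHead, Matrix.vecTail,
      Matrix.cons_val', Matrix.empty_val', Matrix.cons_val_fin_one, Function.comp]
    push_cast
    ring

lemma psdSqrt_adChoi {q : ℝ} (hq : q ∈ Set.Icc (0:ℝ) 1) :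
    psdSqrt (adChoi q)
      = Gm (Real.sqrt ((2*(2-q))⁻¹)) (Real.sqrt (1-q)) (Real.sqrt (q/2)) := by
  have h1 : (0:ℝ) ≤ (2*(2-q))⁻¹ := inv_nonneg.mpr (by nlinarith [hq.2])
  have h2 : (0:ℝ) ≤ q/2 := by linarith [hq.1]
  refine psdSqrt_eq (Gm_posSemidef _ (Real.sqrt_nonneg _) (Real.sqrt_nonneg _)) ?_
  rw [Gm_sq, adChoi_eq_Gm hq.2]
  refine (Gm_eq_Gm ?_ ?_).symm
  · have hs : Real.sqrt (1-q) ^ 2 = 1 - q := Real.sq_sqrt (by linarith [hq.2])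
    have hk : Real.sqrt ((2*(2-q))⁻¹) ^ 2 = (2*(2-q))⁻¹ := Real.sq_sqrt h1
    have hne : (2*(2-q)) ≠ 0 := by nlinarith [hq.2]
    have hne2 : (2-q) ≠ 0 := by linarith [hq.2]
    rw [hk, hs]
    field_simp
    ring
  · rw [Real.sq_sqrt h2]

/-- Fidelity between Choi matrices of qubit amplitude damping channels. -/
theorem fidelity_adChoi (q0 q1 : ℝ)
    (h0 : q0 ∈ Set.Icc (0:ℝ) 1) (h1 : q1 ∈ Set.Icc (0:ℝ) 1) :
    IsDensityMatrix (adChoi q0) ∧ IsDensityMatrix (adChoi q1) ∧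
    fidelity (adChoi q0) (adChoi q1)
      = (1 + Real.sqrt ((1-q0)*(1-q1)) + Real.sqrt (q0*q1)) / 2 := by
  have hq00 := h0.1
  have hq01 := h0.2
  have hq10 := h1.1
  have hq11 := h1.2
  refine ⟨dens_adChoi h0, dens_adChoi h1, ?_⟩
  set s0 := Real.sqrt (1-q0) with hs0def
  set s1 := Real.sqrt (1-q1) with hs1def
  have hs0 : s0 ^ 2 = 1 - q0 := Real.sq_sqrt (by linarith)
  have hs1 : s1 ^ 2 = 1 - q1 := Real.sq_sqrt (by linarith)
  have hs0n : 0 ≤ s0 := Real.sqrt_nonneg _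
  have hs1n : 0 ≤ s1 := Real.sqrt_nonneg _
  have hn0 : (0:ℝ) < 2 - q0 := by linarith
  have hkS : Real.sqrt ((2*(2-q0))⁻¹) ^ 2 = (2*(2-q0))⁻¹ :=
    Real.sq_sqrt (by positivity)
  -- the middle product
  rw [fidelity, psdSqrt_adChoi ⟨hq00, hq01⟩, adChoi_eq_Gm hq11, Gm_triple]
  -- the inner matrix equals Gm kM s0 (q0*q1/4)
  have hinner :
      Gm (Real.sqrt ((2*(2-q0))⁻¹)^2*(1/2)*(1+s0*s1)^2) s0 (Real.sqrt (q0/2)^2*(q1/2))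
        = Gm ((1+s0*s1)^2/(4*(2-q0))) s0 (q0*q1/4) := by
    refine Gm_eq_Gm ?_ ?_
    · rw [hkS]
      field_simp
      ring
    · rw [Real.sq_sqrt (by linarith : (0:ℝ) ≤ q0/2)]
      ring
  rw [hinner]
  -- its psd square root
  have hsqrt : psdSqrt (Gm ((1+s0*s1)^2/(4*(2-q0))) s0 (q0*q1/4))
      = Gm ((1+s0*s1)/(2*(2-q0))) s0 (Real.sqrt (q0*q1)/2) := by
    refine psdSqrt_eq (Gm_posSemidef _ (by positivity) (by positivity)) ?_
    rw [Gm_sq]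
    refine Gm_eq_Gm ?_ ?_
    · rw [hs0]
      field_simp
      ring
    · rw [div_pow, Real.sq_sqrt (by positivity : (0:ℝ) ≤ q0*q1)]
      norm_num
  rw [hsqrt, Gm_trace, Complex.ofReal_re, hs0]
  have hss : s0 * s1 = Real.sqrt ((1-q0)*(1-q1)) := by
    rw [hs0def, hs1def, ← Real.sqrt_mul (by linarith)]
  rw [← hss]
  have hne : (2 - q0) ≠ 0 := by linarith
  field_simp
  ring
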